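/- Let λ ≥ 0 and let f : [−1,1] → ℝ be a broken solution with eigenvalue λ satisfying f(−1) = 0 and f(1) = 1. Then r(λ) > 0 and f(0) = B·e^b / r(λ). -/

import Mathlib

open Set
lemma myexp_tsum (x : ℝ) : Real.exp x = ∑' n : ℕ, x ^ n / n.factorial := by
  rw [Real.exp_eq_exp_ℝ, NormedSpace.exp_eq_tsum_div]

lemma tsum_cosh (t : ℝ) : (∑' n : ℕ, (t^2) ^ n / ((2*n).factorial : ℝ)) = Real.cosh t := by
  set F : ℕ → ℝ := fun n : ℕ => (t ^ n + (-t) ^ n) / (2 * (n.factorial : ℝ)) with hF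
  have hs1 : Summable fun n : ℕ => t ^ n / (n.factorial : ℝ) := Real.summable_pow_div_factorial t
  have hs2 : Summable fun n : ℕ => (-t) ^ n / (n.factorial : ℝ) := Real.summable_pow_div_factorial (-t)
  have hh : Summable F := by
    have h := (hs1.add hs2).div_const 2
    refine h.congr (fun n => ?_)
    simp only [hF]; ring
  have he : Summable (F ∘ (fun k => 2*k)) := hh.comp_injective (fun a b hab => by omega)
  have ho : Summable (F ∘ (fun k => 2*k+1)) := hh.comp_injective (fun a b hab => by omega)
  have key := tsum_even_add_odd (f := F) he ho
  have h1 : (∑' k : ℕ, F (2*k+1)) = 0 := by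
    convert tsum_zero with k
    rw [hF]
    simp only
    rw [Odd.neg_pow ⟨k, by ring⟩]
    ring
  have h2 : (∑' k : ℕ, F (2*k)) = ∑' n : ℕ, (t^2) ^ n / ((2*n).factorial : ℝ) := by
    congr 1 with k
    rw [hF]
    simp only
    rw [Even.neg_pow ⟨k, by ring⟩, ← pow_mul]
    ring
  have h3 : (∑' n : ℕ, F n) = Real.cosh t := by
    rw [Real.cosh_eq, myexp_tsum, myexp_tsum, ← Summable.tsum_add hs1 hs2, ← tsum_div_const]
    congr 1 with n
    rw [hF]; ring
  rw [← key, h1, h2] at h3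
  linarith

lemma tsum_sinh (t : ℝ) (ht : t ≠ 0) :
    (∑' n : ℕ, (t^2) ^ n / ((2*n+1).factorial : ℝ)) = Real.sinh t / t := by
  set F : ℕ → ℝ := fun n : ℕ => (t ^ n - (-t) ^ n) / (2 * (n.factorial : ℝ)) with hF
  have hs1 : Summable fun n : ℕ => t ^ n / (n.factorial : ℝ) := Real.summable_pow_div_factorial t
  have hs2 : Summable fun n : ℕ => (-t) ^ n / (n.factorial : ℝ) := Real.summable_pow_div_factorial (-t)
  have hh : Summable F := by
    have h := (hs1.sub hs2).div_const 2
    refine h.congr (fun n => ?_)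
    simp only [hF]; ring
  have he : Summable (F ∘ (fun k => 2*k)) := hh.comp_injective (fun a b hab => by omega)
  have ho : Summable (F ∘ (fun k => 2*k+1)) := hh.comp_injective (fun a b hab => by omega)
  have key := tsum_even_add_odd (f := F) he ho
  have h1 : (∑' k : ℕ, F (2*k)) = 0 := by
    convert tsum_zero with k
    rw [hF]
    simp only
    rw [Even.neg_pow ⟨k, by ring⟩]
    ring
  have h2 : (∑' k : ℕ, F (2*k+1)) = t * ∑' n : ℕ, (t^2) ^ n / ((2*n+1).factorial : ℝ) := by
    rw [← tsum_mul_left]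
    congr 1 with k
    rw [hF]
    simp only
    rw [Odd.neg_pow ⟨k, by ring⟩, pow_succ, ← pow_mul]
    ring
  have h3 : (∑' n : ℕ, F n) = Real.sinh t := by
    rw [Real.sinh_eq, myexp_tsum, myexp_tsum, ← Summable.tsum_sub hs1 hs2, ← tsum_div_const]
    congr 1 with n
    rw [hF]; ring
  rw [← key, h1, h2] at h3
  field_simp at h3 ⊢
  linarith

lemma wronskian_eq (s a₁ a₂ : ℝ) (h : a₁ < a₂) (g g1 v v1 : ℝ → ℝ)
    (hg : ContinuousOn g (Icc a₁ a₂)) (hg1 : ContinuousOn g1 (Icc a₁ a₂))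
    (hdg : ∀ x ∈ Ioo a₁ a₂, HasDerivAt g (g1 x) x)
    (hdg1 : ∀ x ∈ Ioo a₁ a₂, HasDerivAt g1 (s * g x) x)
    (hdv : ∀ x, HasDerivAt v (v1 x) x)
    (hdv1 : ∀ x, HasDerivAt v1 (s * v x) x) :
    g a₂ * v1 a₂ - g1 a₂ * v a₂ = g a₁ * v1 a₁ - g1 a₁ * v a₁ := by
  set W : ℝ → ℝ := fun x => g x * v1 x - g1 x * v x with hW
  have hvc : Continuous v := by
    rw [continuous_iff_continuousAt]; exact fun x => (hdv x).continuousAt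
  have hv1c : Continuous v1 := by
    rw [continuous_iff_continuousAt]; exact fun x => (hdv1 x).continuousAt
  have hWc : ContinuousOn W (Icc a₁ a₂) :=
    (hg.mul hv1c.continuousOn).sub (hg1.mul hvc.continuousOn)
  have hWd : ∀ x ∈ Ioo a₁ a₂, HasDerivAt W 0 x := by
    intro x hx
    have h1 := ((hdg x hx).mul (hdv1 x)).sub ((hdg1 x hx).mul (hdv x))
    refine h1.congr_deriv ?_
    ring
  obtain ⟨c, _, hc2⟩ := exists_hasDerivAt_eq_slope W (fun _ => 0) h hWc hWd
  have hne : a₂ - a₁ ≠ 0 := by linarith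
  have : W a₂ - W a₁ = 0 := by
    field_simp at hc2
    linarith
  simpa [hW] using sub_eq_zero.mp this

lemma deriv_package (b K : ℝ) (a₁ a₂ : ℝ) (h12 : a₁ < a₂) (f : ℝ → ℝ)
    (hf : ContDiffOn ℝ 2 f (Icc a₁ a₂))
    (hode : ∀ x ∈ Ioo a₁ a₂, deriv (deriv f) x + 2*b*deriv f x = K * f x) :
    ContinuousOn (derivWithin f (Icc a₁ a₂)) (Icc a₁ a₂) ∧
    (∀ x ∈ Ioo a₁ a₂, HasDerivAt f (derivWithin f (Icc a₁ a₂) x) x) ∧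
    (∀ x ∈ Ioo a₁ a₂, HasDerivAt (derivWithin f (Icc a₁ a₂))
        (K * f x - 2*b*(derivWithin f (Icc a₁ a₂) x)) x) := by
  set I := Icc a₁ a₂ with hI
  set f1 := derivWithin f I with hf1
  have hU : UniqueDiffOn ℝ I := uniqueDiffOn_Icc h12
  have hf1c : ContinuousOn f1 I :=
    (hf.derivWithin hU (m := 1) (by norm_num)).continuousOn
  have heq : ∀ x ∈ Ioo a₁ a₂, f1 x = deriv f x := fun x hx =>
    derivWithin_of_mem_nhds (Icc_mem_nhds hx.1 hx.2)
  have hdf : ∀ x ∈ Ioo a₁ a₂, HasDerivAt f (f1 x) x := by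
    intro x hx
    have hca : ContDiffAt ℝ 2 f x := hf.contDiffAt (Icc_mem_nhds hx.1 hx.2)
    have hda : DifferentiableAt ℝ f x := hca.differentiableAt (by norm_num)
    rw [heq x hx]
    exact hda.hasDerivAt
  refine ⟨hf1c, hdf, ?_⟩
  intro x hx
  have hdd : ContDiffOn ℝ 1 (deriv f) (Ioo a₁ a₂) :=
    (hf.mono Ioo_subset_Icc_self).deriv_of_isOpen isOpen_Ioo (by norm_num)
  have hda2 : DifferentiableAt ℝ (deriv f) x :=
    (hdd.differentiableOn (by norm_num)).differentiableAt (isOpen_Ioo.mem_nhds hx)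
  have h1 : HasDerivAt (deriv f) (deriv (deriv f) x) x := hda2.hasDerivAt
  have h2 : deriv (deriv f) x = K * f x - 2*b*(f1 x) := by
    rw [heq x hx]
    have := hode x hx
    linarith
  rw [← h2]
  refine h1.congr_of_eventuallyEq ?_
  filter_upwards [isOpen_Ioo.mem_nhds hx] with y hy
  exact heq y hy

lemma interval_identities (b K s : ℝ) (hs : s = b^2 + K) (a₁ a₂ : ℝ) (h12 : a₁ < a₂)
    (f : ℝ → ℝ) (hf : ContDiffOn ℝ 2 f (Icc a₁ a₂))
    (hode : ∀ x ∈ Ioo a₁ a₂, deriv (deriv f) x + 2*b*deriv f x = K * f x)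
    (v v1 : ℝ → ℝ) (hdv : ∀ x, HasDerivAt v (v1 x) x)
    (hdv1 : ∀ x, HasDerivAt v1 (s * v x) x) :
    Real.exp (b*a₂) * (f a₂ * v1 a₂ - (b * f a₂ + derivWithin f (Icc a₁ a₂) a₂) * v a₂)
    = Real.exp (b*a₁) * (f a₁ * v1 a₁ - (b * f a₁ + derivWithin f (Icc a₁ a₂) a₁) * v a₁) := by
  obtain ⟨hf1c, hdf, hdf1⟩ := deriv_package b K a₁ a₂ h12 f hf hode
  set f1 := derivWithin f (Icc a₁ a₂) with hf1
  set g : ℝ → ℝ := fun x => Real.exp (b*x) * f x with hg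
  set g1 : ℝ → ℝ := fun x => Real.exp (b*x) * (b * f x + f1 x) with hg1
  have hec : Continuous fun x : ℝ => Real.exp (b*x) :=
    Real.continuous_exp.comp (continuous_const.mul continuous_id)
  have hgc : ContinuousOn g (Icc a₁ a₂) := hec.continuousOn.mul hf.continuousOn
  have hg1c : ContinuousOn g1 (Icc a₁ a₂) :=
    hec.continuousOn.mul ((continuousOn_const.mul hf.continuousOn).add hf1c)
  have hde : ∀ x : ℝ, HasDerivAt (fun y : ℝ => Real.exp (b*y)) (b * Real.exp (b*x)) x := by
    intro x
    have h1 : HasDerivAt (fun y : ℝ => b*y) b x := by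
      simpa using (hasDerivAt_id x).const_mul b
    have := (Real.hasDerivAt_exp (b*x)).comp x h1
    refine this.congr_deriv ?_
    ring
  have hdg : ∀ x ∈ Ioo a₁ a₂, HasDerivAt g (g1 x) x := by
    intro x hx
    have := (hde x).mul (hdf x hx)
    refine this.congr_deriv ?_
    simp only [hg1]
    ring
  have hdg1 : ∀ x ∈ Ioo a₁ a₂, HasDerivAt g1 (s * g x) x := by
    intro x hx
    have hinner : HasDerivAt (fun y => b * f y + f1 y) (b * f1 x + (K * f x - 2*b*(f1 x))) x :=
      ((hdf x hx).const_mul b).add (hdf1 x hx)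
    have := (hde x).mul hinner
    refine this.congr_deriv ?_
    simp only [hg, hs]
    ring
  have := wronskian_eq s a₁ a₂ h12 g g1 v v1 hgc hg1c hdg hdg1 hdv hdv1
  simp only [hg, hg1] at this
  linarith [this]

/-- A "broken solution" with eigenvalue `lam` of the ODE `f'' + 2·b·f' = (log q)²·lam·f`
on `[-1,1]`: `f` is continuous on `[-1,1]`, twice continuously differentiable on
`[-1,0]` and on `[0,1]` (with one-sided derivatives at the endpoints), satisfies the
ODE on `(-1,0) ∪ (0,1)`, and its one-sided derivatives at `0` satisfy
`f'(0-) = B · f'(0+)`. -/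
def IsBrokenSolution (q b B lam : ℝ) (f : ℝ → ℝ) : Prop :=
  ContinuousOn f (Set.Icc (-1) 1) ∧
  ContDiffOn ℝ 2 f (Set.Icc (-1) 0) ∧
  ContDiffOn ℝ 2 f (Set.Icc 0 1) ∧
  (∀ x ∈ Set.Ioo (-1 : ℝ) 0 ∪ Set.Ioo (0 : ℝ) 1,
    deriv (deriv f) x + 2 * b * deriv f x = (Real.log q) ^ 2 * lam * f x) ∧
  derivWithin f (Set.Icc (-1) 0) 0 = B * derivWithin f (Set.Icc 0 1) 0

/-- `s(λ) = b² + (log q)²·λ`. -/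
noncomputable def sFun (q b : ℝ) (lam : ℝ) : ℝ := b ^ 2 + (Real.log q) ^ 2 * lam

/-- `r(λ) = (B+1)·∑ s(λ)ⁿ/(2n)! + (B−1)·b·∑ s(λ)ⁿ/(2n+1)!`. -/
noncomputable def rFun (q b B : ℝ) (lam : ℝ) : ℝ :=
  (B + 1) * ∑' n : ℕ, sFun q b lam ^ n / ((2 * n).factorial : ℝ) +
    (B - 1) * b * ∑' n : ℕ, sFun q b lam ^ n / ((2 * n + 1).factorial : ℝ)

set_option maxHeartbeats 1000000 in
theorem brokenSolution_value_at_zero_up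
    (q b B : ℝ) (hq : 1 < q) (hB : 0 < B) (lam : ℝ) (hlam : 0 ≤ lam) (f : ℝ → ℝ)
    (hf : IsBrokenSolution q b B lam f) (hf1 : f (-1) = 0) (hf2 : f 1 = 1) :
    0 < rFun q b B lam ∧ f 0 = B * Real.exp b / rFun q b B lam := by
  obtain ⟨hfc, hfl, hfr, hodeAll, hjump⟩ := hf
  set K := (Real.log q)^2 * lam with hK
  have hc : 0 < Real.log q := Real.log_pos hq
  have hK0 : 0 ≤ K := mul_nonneg (sq_nonneg _) hlam
  set s := b^2 + K with hsdef
  have hs0 : 0 ≤ s := add_nonneg (sq_nonneg b) hK0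
  have hodeL : ∀ x ∈ Ioo (-1:ℝ) 0, deriv (deriv f) x + 2*b*deriv f x = K * f x :=
    fun x hx => hodeAll x (Or.inl hx)
  have hodeR : ∀ x ∈ Ioo (0:ℝ) 1, deriv (deriv f) x + 2*b*deriv f x = K * f x :=
    fun x hx => hodeAll x (Or.inr hx)
  have hsfun : sFun q b lam = s := rfl
  set A := f 0 with hA
  set D := derivWithin f (Icc (-1) 0) 0 with hD
  set D' := derivWithin f (Icc 0 1) 0 with hD'
  set E := derivWithin f (Icc (-1) 0) (-1) with hE
  set F := derivWithin f (Icc 0 1) 1 with hF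
  rcases eq_or_lt_of_le hs0 with hszero | hspos
  · -- degenerate case s = 0
    have hb : b = 0 := by nlinarith [sq_nonneg b]
    have hr : rFun q b B lam = B + 1 := by
      have h1 : (∑' n : ℕ, sFun q b lam ^ n / ((2 * n).factorial : ℝ)) = 1 := by
        rw [hsfun, ← hszero]
        rw [tsum_eq_single 0 (fun n hn => by simp [zero_pow hn])]
        norm_num
      have h2 : (∑' n : ℕ, sFun q b lam ^ n / ((2 * n + 1).factorial : ℝ)) = 1 := by
        rw [hsfun, ← hszero]
        rw [tsum_eq_single 0 (fun n hn => by simp [zero_pow hn])]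
        norm_num
      rw [rFun, h1, h2, hb]
      ring
    have hdv : ∀ x : ℝ, HasDerivAt (fun _ : ℝ => (1:ℝ)) ((fun _ : ℝ => (0:ℝ)) x) x :=
      fun x => hasDerivAt_const x 1
    have hdv1 : ∀ x : ℝ, HasDerivAt (fun _ : ℝ => (0:ℝ)) (s * (fun _ : ℝ => (1:ℝ)) x) x := by
      intro x
      have : s * (1:ℝ) = 0 := by rw [← hszero]; ring
      rw [this]
      exact hasDerivAt_const x 0
    have hdw : ∀ x : ℝ, HasDerivAt (fun y : ℝ => y) ((fun _ : ℝ => (1:ℝ)) x) x :=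
      fun x => hasDerivAt_id x
    have hdw1 : ∀ x : ℝ, HasDerivAt (fun _ : ℝ => (1:ℝ)) (s * x) x := by
      intro x
      have : s * x = 0 := by rw [← hszero]; ring
      rw [this]
      exact hasDerivAt_const x 1 |>.congr_deriv rfl
    have EL1 := interval_identities b K s hsdef (-1) 0 (by norm_num) f hfl hodeL
      (fun y : ℝ => y) (fun _ : ℝ => (1:ℝ)) hdw hdw1
    have EL2 := interval_identities b K s hsdef (-1) 0 (by norm_num) f hfl hodeL
      (fun _ : ℝ => (1:ℝ)) (fun _ : ℝ => (0:ℝ)) hdv hdv1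
    have ER1 := interval_identities b K s hsdef 0 1 (by norm_num) f hfr hodeR
      (fun y : ℝ => y) (fun _ : ℝ => (1:ℝ)) hdw hdw1
    have ER2 := interval_identities b K s hsdef 0 1 (by norm_num) f hfr hodeR
      (fun _ : ℝ => (1:ℝ)) (fun _ : ℝ => (0:ℝ)) hdv hdv1
    rw [hb] at EL1 EL2 ER1 ER2
    simp only [mul_zero, mul_one, mul_neg, zero_mul, zero_add, Real.exp_zero, one_mul,
      hf1, hf2, neg_zero, sub_zero, zero_sub, neg_neg] at EL1 EL2 ER1 ER2
    -- EL1 : A = E ; EL2 : -D = -E ; ER1 : 1 - F = A ; ER2 : -F = -D'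
    have hAD : A * (B + 1) = B := by
      rw [← hA, ← hE] at EL1
      rw [← hD, ← hE] at EL2
      rw [← hA, ← hF] at ER1
      rw [← hF, ← hD'] at ER2
      linear_combination EL1 + EL2 + hjump + B * ER2 - B * ER1
    constructor
    · rw [hr]; linarith
    · rw [hr, hb, Real.exp_zero]
      have : B + 1 ≠ 0 := by linarith
      field_simp
      linarith
  · -- main case s > 0
    set t := Real.sqrt s with htdef
    have ht : 0 < t := Real.sqrt_pos.mpr hspos
    have ht2 : t^2 = s := Real.sq_sqrt hs0
    have htne : t ≠ 0 := ne_of_gt ht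
    have hdmul : ∀ x : ℝ, HasDerivAt (fun y : ℝ => t*y) t x := by
      intro x
      simpa using (hasDerivAt_id x).const_mul t
    have hdC : ∀ x : ℝ, HasDerivAt (fun y : ℝ => Real.cosh (t*y)) (t * Real.sinh (t*x)) x := by
      intro x
      have := (Real.hasDerivAt_cosh (t*x)).comp x (hdmul x)
      refine this.congr_deriv ?_
      ring
    have hdS : ∀ x : ℝ, HasDerivAt (fun y : ℝ => Real.sinh (t*y)) (t * Real.cosh (t*x)) x := by
      intro x
      have := (Real.hasDerivAt_sinh (t*x)).comp x (hdmul x)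
      refine this.congr_deriv ?_
      ring
    have hdC1 : ∀ x : ℝ, HasDerivAt (fun y : ℝ => t * Real.sinh (t*y))
        (s * Real.cosh (t*x)) x := by
      intro x
      have := (hdS x).const_mul t
      refine this.congr_deriv ?_
      rw [← ht2]; ring
    have hdS1 : ∀ x : ℝ, HasDerivAt (fun y : ℝ => t * Real.cosh (t*y))
        (s * Real.sinh (t*x)) x := by
      intro x
      have := (hdC x).const_mul t
      refine this.congr_deriv ?_
      rw [← ht2]; ring
    have EL1 := interval_identities b K s hsdef (-1) 0 (by norm_num) f hfl hodeL
      (fun y : ℝ => Real.sinh (t*y)) (fun y : ℝ => t * Real.cosh (t*y)) hdS hdS1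
    have EL2 := interval_identities b K s hsdef (-1) 0 (by norm_num) f hfl hodeL
      (fun y : ℝ => Real.cosh (t*y)) (fun y : ℝ => t * Real.sinh (t*y)) hdC hdC1
    have ER1 := interval_identities b K s hsdef 0 1 (by norm_num) f hfr hodeR
      (fun y : ℝ => Real.sinh (t*y)) (fun y : ℝ => t * Real.cosh (t*y)) hdS hdS1
    have ER2 := interval_identities b K s hsdef 0 1 (by norm_num) f hfr hodeR
      (fun y : ℝ => Real.cosh (t*y)) (fun y : ℝ => t * Real.sinh (t*y)) hdC hdC1
    simp only [mul_zero, mul_one, mul_neg, Real.sinh_zero, Real.cosh_zero, Real.exp_zero,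
      one_mul, hf1, hf2, Real.cosh_neg, Real.sinh_neg, zero_mul, zero_add, sub_zero,
      zero_sub, neg_neg, neg_mul] at EL1 EL2 ER1 ER2
    set C := Real.cosh t with hCdef
    set S := Real.sinh t with hSdef
    have hCS : S < C := by
      rw [hCdef, hSdef, Real.cosh_eq, Real.sinh_eq]
      have := Real.exp_pos (-t)
      linarith
    have hS0 : 0 < S := by
      rw [hSdef]
      exact Real.sinh_pos_iff.mpr ht
    have hC0 : 0 < C := lt_trans hS0 hCS
    have hCS1 : C^2 - S^2 = 1 := by
      rw [hCdef, hSdef]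
      simpa [sq] using Real.cosh_sq_sub_sinh_sq t
    have hbt : b^2 ≤ t^2 := by rw [ht2, hsdef]; linarith
    have habs : |b| ≤ t := by
      rw [← Real.sqrt_sq_eq_abs, ← Real.sqrt_sq ht.le]
      exact Real.sqrt_le_sqrt hbt
    rw [← hA, ← hE] at EL1
    rw [← hA, ← hE, ← hD] at EL2
    rw [← hA, ← hF] at ER1
    rw [← hA, ← hF, ← hD'] at ER2
    -- clean equations
    have eqL : t * A * C = (b * A + D) * S := by
      linear_combination C * EL1 + S * EL2
    have eqR : Real.exp b * t = t * A * C + (b * A + D') * S := by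
      linear_combination C * ER1 - S * ER2 - (Real.exp b * t) * hCS1
    -- value of rFun
    have hr : rFun q b B lam = (B+1) * C + (B-1) * b * (S / t) := by
      have hsf : sFun q b lam = t^2 := by rw [hsfun, ht2]
      rw [rFun, hsf, tsum_cosh t, tsum_sinh t htne, hCdef, hSdef]
    have hrt : rFun q b B lam * t = (B+1) * t * C + (B-1) * b * S := by
      rw [hr]; field_simp
    have hrpos : 0 < rFun q b B lam := by
      have habs2 : |(B-1)*b| ≤ (B+1)*t := by
        rw [abs_mul]
        exact mul_le_mul (abs_le.mpr ⟨by linarith, by linarith⟩) habs (abs_nonneg b)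
          (by linarith)
      have key : 0 < rFun q b B lam * t := by
        rw [hrt]
        nlinarith [mul_le_mul_of_nonneg_right (neg_le_of_abs_le habs2) hS0.le,
          mul_pos (mul_pos (show (0:ℝ) < B + 1 by linarith) ht)
            (show (0:ℝ) < C - S by linarith)]
      nlinarith [key, ht]
    have hmain : A * (rFun q b B lam * t) = B * Real.exp b * t := by
      rw [hrt]
      linear_combination eqL - B * eqR + S * hjump
    refine ⟨hrpos, ?_⟩
    have hAr : A * rFun q b B lam = B * Real.exp b :=
      mul_right_cancel₀ htne (by linear_combination hmain)
    rw [eq_div_iff (ne_of_gt hrpos)]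
    linarith [hAr]
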